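/- Let X be a nonzero real m×n matrix. Then SIM(X) is the unique solution of the optimization problem: minimize ‖Z‖_* over all real n×n matrices Z subject to X = XZ; moreover, the minimum objective value equals rank(X). That is: (i) X·SIM(X) = X, (ii) ‖SIM(X)‖_* = rank(X), (iii) every n×n matrix Z with X = XZ satisfies ‖Z‖_* ≥ rank(X), and (iv) if X = XZ and ‖Z‖_* = rank(X) then Z = SIM(X). -/

import Mathlib

open Matrix

/-- The nuclear norm of a real matrix: the sum of its singular values
(the square roots of the eigenvalues of `Aᵀ * A`). -/
noncomputable def nuclearNorm {m n : Type*} [Fintype m] [Fintype n] [DecidableEq n]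
    (A : Matrix m n ℝ) : ℝ :=
  ∑ i, Real.sqrt ((show (Aᵀ * A).IsHermitian by
    simpa using Matrix.isHermitian_conjTranspose_mul_self A).eigenvalues i)

/-- The shape interaction matrix of a real `m × n` matrix `X`: the `n × n`
orthogonal projection matrix onto the row space of `X`. -/
noncomputable def SIM {m n : ℕ} (X : Matrix (Fin m) (Fin n) ℝ) :
    Matrix (Fin n) (Fin n) ℝ :=
  let U : Submodule ℝ (EuclideanSpace ℝ (Fin n)) :=
    Submodule.span ℝ (Set.range fun i => (WithLp.toLp 2 (X i) : EuclideanSpace ℝ (Fin n)))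
  LinearMap.toMatrix'
    ((WithLp.linearEquiv 2 ℝ (Fin n → ℝ)).toLinearMap ∘ₗ
      ((U.subtypeL.comp (U.orthogonalProjectionOnto)).toLinearMap :
        EuclideanSpace ℝ (Fin n) →ₗ[ℝ] EuclideanSpace ℝ (Fin n)) ∘ₗ
      (WithLp.linearEquiv 2 ℝ (Fin n → ℝ)).symm.toLinearMap :
      (Fin n → ℝ) →ₗ[ℝ] (Fin n → ℝ))

namespace SIMProof

open scoped RealInnerProductSpace

variable {m n : ℕ}

/-- Identity bridge from plain functions into Euclidean space. -/
def toE {n : ℕ} (x : Fin n → ℝ) : EuclideanSpace ℝ (Fin n) := WithLp.toLp 2 x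

@[simp] lemma toE_coe (x : Fin n → ℝ) : ⇑(toE x) = x := rfl

@[simp] lemma coe_toE (x : EuclideanSpace ℝ (Fin n)) : toE ⇑x = x := rfl

/-- The row space of a matrix. -/
noncomputable def rs (X : Matrix (Fin m) (Fin n) ℝ) : Submodule ℝ (EuclideanSpace ℝ (Fin n)) :=
  Submodule.span ℝ (Set.range fun i => (WithLp.toLp 2 (X i) : EuclideanSpace ℝ (Fin n)))

lemma inner_toE (x y : Fin n → ℝ) : ⟪toE x, toE y⟫ = x ⬝ᵥ y := by
  simp [toE, PiLp.inner_apply, dotProduct, RCLike.inner_apply, mul_comm]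

lemma sim_mulVec (X : Matrix (Fin m) (Fin n) ℝ) (x : Fin n → ℝ) :
    toE (SIM X *ᵥ x) = ((rs X).orthogonalProjectionOnto (toE x) : EuclideanSpace ℝ (Fin n)) := by
  have h : SIM X = LinearMap.toMatrix'
      ((WithLp.linearEquiv 2 ℝ (Fin n → ℝ)).toLinearMap ∘ₗ
        ((((rs X).subtypeL.comp ((rs X).orthogonalProjectionOnto)).toLinearMap :
          EuclideanSpace ℝ (Fin n) →ₗ[ℝ] EuclideanSpace ℝ (Fin n))) ∘ₗ
        (WithLp.linearEquiv 2 ℝ (Fin n → ℝ)).symm.toLinearMap :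
        (Fin n → ℝ) →ₗ[ℝ] (Fin n → ℝ)) := rfl
  have h2 : SIM X *ᵥ x = Matrix.toLin' (SIM X) x := (Matrix.toLin'_apply _ _).symm
  rw [h2, h, Matrix.toLin'_toMatrix']
  rfl

lemma sim_mem (X : Matrix (Fin m) (Fin n) ℝ) (x : Fin n → ℝ) :
    toE (SIM X *ᵥ x) ∈ rs X := by
  rw [sim_mulVec]; exact Submodule.coe_mem _

lemma sim_fix (X : Matrix (Fin m) (Fin n) ℝ) {x : EuclideanSpace ℝ (Fin n)} (hx : x ∈ rs X) :
    toE (SIM X *ᵥ ⇑x) = x := by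
  rw [sim_mulVec, coe_toE]
  exact (rs X).starProjection_eq_self_iff.2 hx

lemma sim_ann (X : Matrix (Fin m) (Fin n) ℝ) {x : EuclideanSpace ℝ (Fin n)} (hx : x ∈ (rs X)ᗮ) :
    toE (SIM X *ᵥ ⇑x) = 0 := by
  rw [sim_mulVec, coe_toE,
    Submodule.orthogonalProjectionOnto_apply_of_mem_orthogonal hx]
  rfl

lemma norm_sim_le (X : Matrix (Fin m) (Fin n) ℝ) (x : Fin n → ℝ) :
    ‖toE (SIM X *ᵥ x)‖ ≤ ‖toE x‖ := by
  rw [sim_mulVec]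
  calc ‖((rs X).orthogonalProjectionOnto (toE x) : EuclideanSpace ℝ (Fin n))‖
      = ‖(rs X).orthogonalProjectionOnto (toE x)‖ := rfl
    _ ≤ ‖(rs X).orthogonalProjectionOnto‖ * ‖toE x‖ := ContinuousLinearMap.le_opNorm _ _
    _ ≤ 1 * ‖toE x‖ :=
        mul_le_mul_of_nonneg_right (Submodule.orthogonalProjectionOnto_norm_le _) (norm_nonneg _)
    _ = ‖toE x‖ := one_mul _

/-- extensionality of matrices via mulVec -/
lemma ext_mulVec {A B : Matrix (Fin n) (Fin n) ℝ}
    (h : ∀ v : Fin n → ℝ, A *ᵥ v = B *ᵥ v) : A = B := by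
  ext i j
  have := congrFun (h (Pi.single j 1)) i
  simpa [Matrix.mulVec_single] using this

lemma ext_mulVec_basis (b : OrthonormalBasis (Fin n) ℝ (EuclideanSpace ℝ (Fin n)))
    {A B : Matrix (Fin n) (Fin n) ℝ}
    (h : ∀ i, A *ᵥ ⇑(b i) = B *ᵥ ⇑(b i)) : A = B := by
  apply Matrix.toEuclideanLin.injective
  apply Module.Basis.ext b.toBasis
  intro i
  rw [OrthonormalBasis.coe_toBasis]
  rw [Matrix.toEuclideanLin_apply, Matrix.toEuclideanLin_apply]
  exact congrArg _ (h i)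

lemma entry_eq (M : Matrix (Fin n) (Fin n) ℝ) (i j : Fin n) :
    M i j = (M *ᵥ Pi.single j 1) i := by
  simp [Matrix.mulVec_single]

lemma apply_eq_inner (x : EuclideanSpace ℝ (Fin n)) (i : Fin n) :
    ⇑x i = ⟪toE (Pi.single i 1), x⟫ := by
  rw [← coe_toE x, inner_toE]
  simp [dotProduct, Pi.single_apply]

lemma sim_transpose (X : Matrix (Fin m) (Fin n) ℝ) : (SIM X)ᵀ = SIM X := by
  ext i j
  rw [Matrix.transpose_apply]
  rw [entry_eq (SIM X) i j, entry_eq (SIM X) j i]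
  have hi : (SIM X *ᵥ Pi.single j 1) i = ⟪toE (Pi.single i 1), toE (SIM X *ᵥ Pi.single j 1)⟫ := by
    rw [← apply_eq_inner]; rfl
  have hj : (SIM X *ᵥ Pi.single i 1) j = ⟪toE (Pi.single j 1), toE (SIM X *ᵥ Pi.single i 1)⟫ := by
    rw [← apply_eq_inner]; rfl
  rw [hi, hj, sim_mulVec, sim_mulVec]
  rw [real_inner_comm]
  exact Submodule.inner_starProjection_left_eq_right _ _ _

lemma sim_mul_sim (X : Matrix (Fin m) (Fin n) ℝ) : SIM X * SIM X = SIM X := by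
  apply ext_mulVec
  intro v
  rw [← Matrix.mulVec_mulVec]
  have := sim_fix X (sim_mem X v)
  calc SIM X *ᵥ (SIM X *ᵥ v) = SIM X *ᵥ ⇑(toE (SIM X *ᵥ v)) := rfl
    _ = ⇑(toE (SIM X *ᵥ ⇑(toE (SIM X *ᵥ v)))) := rfl
    _ = ⇑(toE (SIM X *ᵥ v)) := by rw [this]
    _ = SIM X *ᵥ v := rfl

lemma row_mem_rs (X : Matrix (Fin m) (Fin n) ℝ) (i : Fin m) : toE (X i) ∈ rs X :=
  Submodule.subset_span ⟨i, rfl⟩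

lemma X_mul_sim (X : Matrix (Fin m) (Fin n) ℝ) : X * SIM X = X := by
  ext i j
  have h1 : (X * SIM X) i j = (X i ᵥ* SIM X) j := by
    simp [Matrix.mul_apply, Matrix.vecMul, dotProduct]
  have h2 : X i ᵥ* SIM X = SIM X *ᵥ X i := by
    rw [← sim_transpose X, Matrix.vecMul_transpose, sim_transpose]
  have h3 : SIM X *ᵥ X i = X i := congrArg WithLp.ofLp (sim_fix X (row_mem_rs X i))
  rw [h1, h2, h3]

lemma inner_coe (x y : EuclideanSpace ℝ (Fin n)) : ⟪x, y⟫ = ⇑x ⬝ᵥ ⇑y := by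
  simpa using inner_toE (n := n) ⇑x ⇑y

section Constraint

variable (X : Matrix (Fin m) (Fin n) ℝ) (Z : Matrix (Fin n) (Fin n) ℝ)

lemma fixed_rows (hZ : X = X * Z) (i : Fin m) : Zᵀ *ᵥ X i = X i := by
  have h1 : X i ᵥ* Z = X i := by
    funext j
    have : (X * Z) i j = (X i ᵥ* Z) j := by
      simp [Matrix.mul_apply, Matrix.vecMul, dotProduct]
    rw [← this, ← hZ]
  rw [Matrix.mulVec_transpose, h1]

lemma fixed_on_rs (hZ : X = X * Z) {u : EuclideanSpace ℝ (Fin n)} (hu : u ∈ rs X) :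
    Zᵀ *ᵥ ⇑u = ⇑u := by
  induction hu using Submodule.span_induction with
  | mem x hx =>
      obtain ⟨i, rfl⟩ := hx
      exact fixed_rows X Z hZ i
  | zero => simpa using Matrix.mulVec_zero Zᵀ
  | add x y hx hy ihx ihy =>
      have : ⇑(x + y) = ⇑x + ⇑y := rfl
      rw [this, Matrix.mulVec_add, ihx, ihy]
  | smul a x hx ihx =>
      have : ⇑(a • x) = a • ⇑x := rfl
      rw [this, Matrix.mulVec_smul, ihx]

lemma Zt_mul_sim (hZ : X = X * Z) : Zᵀ * SIM X = SIM X := by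
  apply ext_mulVec
  intro v
  rw [← Matrix.mulVec_mulVec]
  exact fixed_on_rs X Z hZ (sim_mem X v)

lemma sim_mul_Z (hZ : X = X * Z) : SIM X * Z = SIM X := by
  have h := congrArg Matrix.transpose (Zt_mul_sim X Z hZ)
  rw [Matrix.transpose_mul, Matrix.transpose_transpose, sim_transpose] at h
  exact h

end Constraint

lemma sum_dot_eq_trace (b : OrthonormalBasis (Fin n) ℝ (EuclideanSpace ℝ (Fin n)))
    (M : Matrix (Fin n) (Fin n) ℝ) :
    ∑ i, ⇑(b i) ⬝ᵥ (M *ᵥ ⇑(b i)) = M.trace := by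
  set B : Matrix (Fin n) (Fin n) ℝ := Matrix.of (fun j i => ⇑(b i) j) with hB
  have hBtB : Bᵀ * B = 1 := by
    ext i k
    have h := orthonormal_iff_ite.mp b.orthonormal i k
    rw [inner_coe] at h
    simpa [Matrix.mul_apply, Matrix.one_apply, hB, dotProduct, PiLp.toLp_apply] using h
  have hBBt : B * Bᵀ = 1 := mul_eq_one_comm.mp hBtB
  have key : ∀ i, ⇑(b i) ⬝ᵥ (M *ᵥ ⇑(b i)) = (Bᵀ * M * B) i i := by
    intro i
    simp only [Matrix.mul_apply, Matrix.transpose_apply, dotProduct, Matrix.mulVec, hB,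
      Matrix.of_apply, Finset.sum_mul, Finset.mul_sum, PiLp.toLp_apply]
    rw [Finset.sum_comm]
    apply Finset.sum_congr rfl
    intro j _
    apply Finset.sum_congr rfl
    intro k _
    ring
  calc ∑ i, ⇑(b i) ⬝ᵥ (M *ᵥ ⇑(b i)) = ∑ i, (Bᵀ * M * B) i i := by
        exact Finset.sum_congr rfl fun i _ => key i
    _ = (Bᵀ * M * B).trace := by simp [Matrix.trace, Matrix.diag]
    _ = (B * Bᵀ * M).trace := Matrix.trace_mul_cycle Bᵀ M B
    _ = M.trace := by rw [hBBt, one_mul]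

section Eigen

/-- eigenvalues of `Zᴴ * Z` -/
lemma hermT (Z : Matrix (Fin n) (Fin n) ℝ) : (Zᵀ * Z).IsHermitian := by
  simpa using Matrix.isHermitian_conjTranspose_mul_self Z

noncomputable def lam (Z : Matrix (Fin n) (Fin n) ℝ) : Fin n → ℝ :=
  (hermT Z).eigenvalues

/-- eigenvector basis of `Zᴴ * Z` -/
noncomputable def evb (Z : Matrix (Fin n) (Fin n) ℝ) :
    OrthonormalBasis (Fin n) ℝ (EuclideanSpace ℝ (Fin n)) :=
  (hermT Z).eigenvectorBasis

lemma nuclearNorm_eq (Z : Matrix (Fin n) (Fin n) ℝ) :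
    nuclearNorm Z = ∑ i, Real.sqrt (lam Z i) := rfl

lemma ZtZ_mulVec (Z : Matrix (Fin n) (Fin n) ℝ) (i : Fin n) :
    Zᵀ *ᵥ (Z *ᵥ ⇑(evb Z i)) = lam Z i • ⇑(evb Z i) := by
  have h := (hermT Z).mulVec_eigenvectorBasis i
  rw [Matrix.mulVec_mulVec]
  exact h

lemma dot_self_evb (b : OrthonormalBasis (Fin n) ℝ (EuclideanSpace ℝ (Fin n))) (i : Fin n) :
    ⇑(b i) ⬝ᵥ ⇑(b i) = 1 := by
  have h := orthonormal_iff_ite.mp b.orthonormal i i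
  rw [inner_coe] at h
  simpa using h

lemma dot_eigen (Z : Matrix (Fin n) (Fin n) ℝ) (i : Fin n) :
    (Z *ᵥ ⇑(evb Z i)) ⬝ᵥ (Z *ᵥ ⇑(evb Z i)) = lam Z i := by
  calc (Z *ᵥ ⇑(evb Z i)) ⬝ᵥ (Z *ᵥ ⇑(evb Z i))
      = (⇑(evb Z i) ᵥ* Zᵀ) ⬝ᵥ (Z *ᵥ ⇑(evb Z i)) := by rw [Matrix.vecMul_transpose]
    _ = ⇑(evb Z i) ⬝ᵥ (Zᵀ *ᵥ (Z *ᵥ ⇑(evb Z i))) := (Matrix.dotProduct_mulVec _ _ _).symm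
    _ = ⇑(evb Z i) ⬝ᵥ (lam Z i • ⇑(evb Z i)) := by rw [ZtZ_mulVec]
    _ = lam Z i * (⇑(evb Z i) ⬝ᵥ ⇑(evb Z i)) := by
        simp [dotProduct_smul, smul_eq_mul]
    _ = lam Z i := by rw [dot_self_evb, mul_one]

lemma lam_nonneg (Z : Matrix (Fin n) (Fin n) ℝ) (i : Fin n) : 0 ≤ lam Z i := by
  rw [← dot_eigen Z i]
  exact Finset.sum_nonneg fun j _ => mul_self_nonneg _

lemma norm_toE_eq (x : Fin n → ℝ) : ‖toE x‖ = Real.sqrt (x ⬝ᵥ x) := by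
  rw [← inner_toE x x, real_inner_self_eq_norm_mul_norm,
    Real.sqrt_mul_self (norm_nonneg _)]

lemma norm_Zv (Z : Matrix (Fin n) (Fin n) ℝ) (i : Fin n) :
    ‖toE (Z *ᵥ ⇑(evb Z i))‖ = Real.sqrt (lam Z i) := by
  rw [norm_toE_eq, dot_eigen]

lemma norm_evb_toE (b : OrthonormalBasis (Fin n) ℝ (EuclideanSpace ℝ (Fin n))) (i : Fin n) :
    ‖toE ⇑(b i)‖ = 1 := by
  rw [coe_toE]; exact b.orthonormal.1 i

end Eigen

lemma sum_inner_eq_trace_sim (X : Matrix (Fin m) (Fin n) ℝ) (W : Matrix (Fin n) (Fin n) ℝ)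
    (hW : SIM X * W = SIM X) (b : OrthonormalBasis (Fin n) ℝ (EuclideanSpace ℝ (Fin n))) :
    ∑ i, ⟪toE (SIM X *ᵥ ⇑(b i)), toE (W *ᵥ ⇑(b i))⟫ = (SIM X).trace := by
  have hterm : ∀ x : Fin n → ℝ, ⟪toE (SIM X *ᵥ x), toE (W *ᵥ x)⟫ = x ⬝ᵥ (SIM X *ᵥ x) := by
    intro x
    rw [inner_toE]
    calc (SIM X *ᵥ x) ⬝ᵥ (W *ᵥ x)
        = (W *ᵥ x) ⬝ᵥ (SIM X *ᵥ x) := dotProduct_comm _ _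
      _ = ((W *ᵥ x) ᵥ* SIM X) ⬝ᵥ x := Matrix.dotProduct_mulVec _ _ _
      _ = x ⬝ᵥ ((W *ᵥ x) ᵥ* SIM X) := dotProduct_comm _ _
      _ = x ⬝ᵥ ((SIM X)ᵀ *ᵥ (W *ᵥ x)) := by rw [Matrix.mulVec_transpose]
      _ = x ⬝ᵥ (((SIM X)ᵀ * W) *ᵥ x) := by rw [Matrix.mulVec_mulVec]
      _ = x ⬝ᵥ (SIM X *ᵥ x) := by rw [sim_transpose, hW]
  rw [Finset.sum_congr rfl fun i _ => hterm ⇑(b i)]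
  exact sum_dot_eq_trace b (SIM X)

section SimEigen

variable (X : Matrix (Fin m) (Fin n) ℝ)

lemma sim_eigen_mulVec (i : Fin n) :
    SIM X *ᵥ ⇑(evb (SIM X) i) = lam (SIM X) i • ⇑(evb (SIM X) i) := by
  have h := ZtZ_mulVec (SIM X) i
  rw [Matrix.mulVec_mulVec, sim_transpose, sim_mul_sim] at h
  exact h

lemma sim_lam_01 (i : Fin n) : lam (SIM X) i = 1 ∨ lam (SIM X) i = 0 := by
  set l := lam (SIM X) i with hl
  have h := sim_eigen_mulVec X i
  have h2 : SIM X *ᵥ (SIM X *ᵥ ⇑(evb (SIM X) i)) = l • l • ⇑(evb (SIM X) i) := by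
    rw [h, Matrix.mulVec_smul, h]
  rw [Matrix.mulVec_mulVec, sim_mul_sim, h] at h2
  have h3 : (l * l - l) • ⇑(evb (SIM X) i) = (0 : Fin n → ℝ) := by
    rw [sub_smul, mul_smul, ← h2, ← hl, sub_self]
  rcases smul_eq_zero.mp h3 with hc | hx
  · rcases eq_or_ne l 0 with h0 | h0
    · right; exact h0
    · left
      have : l * l = l := by linarith [sub_eq_zero.mp (by linarith [hc] : l * l - l = 0)]
      calc l = l * l / l := by field_simp
        _ = l / l := by rw [this]
        _ = 1 := div_self h0
  · exfalso
    apply (evb (SIM X)).orthonormal.ne_zero i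
    have : toE ⇑(evb (SIM X) i) = toE 0 := congrArg toE hx
    rw [coe_toE] at this
    rw [this]; rfl

lemma evb_mem_of_lam_one {i : Fin n} (h : lam (SIM X) i = 1) : evb (SIM X) i ∈ rs X := by
  have h1 := sim_eigen_mulVec X i
  rw [h, one_smul] at h1
  have h2 : toE (SIM X *ᵥ ⇑(evb (SIM X) i)) ∈ rs X := sim_mem X _
  rw [h1, coe_toE] at h2
  exact h2

lemma evb_orth_of_lam_zero {i : Fin n} (h : lam (SIM X) i = 0) :
    evb (SIM X) i ∈ (rs X)ᗮ := by
  have h1 := sim_eigen_mulVec X i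
  rw [h, zero_smul] at h1
  have h2 := sim_mulVec X ⇑(evb (SIM X) i)
  rw [h1, coe_toE] at h2
  have h3 : evb (SIM X) i - ↑((rs X).orthogonalProjectionOnto (toE ⇑(evb (SIM X) i))) ∈ (rs X)ᗮ :=
    Submodule.sub_starProjection_mem_orthogonal (K := rs X) (evb (SIM X) i)
  rw [← h2] at h3
  have h4 : (WithLp.toLp 2 (0 : Fin n → ℝ) : EuclideanSpace ℝ (Fin n)) = 0 := rfl
  rw [h4, sub_zero] at h3
  exact h3

end SimEigen

section Counting

variable (X : Matrix (Fin m) (Fin n) ℝ)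

lemma span_le_rs (b : OrthonormalBasis (Fin n) ℝ (EuclideanSpace ℝ (Fin n)))
    (S : Finset (Fin n)) (hmem : ∀ i ∈ S, b i ∈ rs X) :
    Submodule.span ℝ (Set.range fun i : S => b i) ≤ rs X :=
  Submodule.span_le.2 (by rintro x ⟨⟨i, hi⟩, rfl⟩; exact hmem i hi)

lemma finrank_span_sub (b : OrthonormalBasis (Fin n) ℝ (EuclideanSpace ℝ (Fin n)))
    (S : Finset (Fin n)) :
    Module.finrank ℝ (Submodule.span ℝ (Set.range fun i : S => b i)) = S.card := by
  have horth : Orthonormal ℝ (fun i : S => b i) :=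
    b.orthonormal.comp Subtype.val Subtype.val_injective
  rw [finrank_span_eq_card horth.linearIndependent]
  exact Fintype.card_coe S

lemma card_eq_finrank (b : OrthonormalBasis (Fin n) ℝ (EuclideanSpace ℝ (Fin n)))
    (S : Finset (Fin n)) (hmem : ∀ i ∈ S, b i ∈ rs X)
    (horth : ∀ i ∉ S, b i ∈ (rs X)ᗮ) :
    S.card = Module.finrank ℝ (rs X) := by
  have hle := span_le_rs X b S hmem
  have hge : rs X ≤ Submodule.span ℝ (Set.range fun i : S => b i) := by
    intro u hu
    have hrep := b.sum_repr' u
    rw [← hrep]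
    apply Submodule.sum_mem
    intro i _
    by_cases hi : i ∈ S
    · exact Submodule.smul_mem _ _ (Submodule.subset_span ⟨⟨i, hi⟩, rfl⟩)
    · have hz : ⟪b i, u⟫ = 0 := by
        rw [real_inner_comm]
        exact (Submodule.mem_orthogonal _ _).1 (horth i hi) u hu
      rw [hz, zero_smul]
      exact Submodule.zero_mem _
  rw [← le_antisymm hle hge]
  exact (finrank_span_sub b S).symm

lemma orth_of_card (b : OrthonormalBasis (Fin n) ℝ (EuclideanSpace ℝ (Fin n)))
    (S : Finset (Fin n)) (hmem : ∀ i ∈ S, b i ∈ rs X)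
    (hcard : S.card = Module.finrank ℝ (rs X)) :
    ∀ i ∉ S, b i ∈ (rs X)ᗮ := by
  have hle := span_le_rs X b S hmem
  have hspan : Submodule.span ℝ (Set.range fun i : S => b i) = rs X := by
    apply Submodule.eq_of_le_of_finrank_le hle
    rw [finrank_span_sub b S]
    exact hcard.ge
  intro i hi
  rw [← hspan, Submodule.mem_orthogonal]
  intro u hu
  induction hu using Submodule.span_induction with
  | mem x hx =>
      obtain ⟨⟨j, hj⟩, rfl⟩ := hx
      have hne : j ≠ i := fun h => hi (h ▸ hj)
      have h := orthonormal_iff_ite.mp b.orthonormal j i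
      rw [h, if_neg hne]
  | zero => exact inner_zero_left _
  | add x y hx hy ihx ihy => rw [inner_add_left, ihx, ihy, add_zero]
  | smul a x hx ihx => rw [real_inner_smul_left, ihx, mul_zero]

end Counting

section RankTrace

variable (X : Matrix (Fin m) (Fin n) ℝ)

/-- eigenvalue-one index set of the projection `SIM X` -/
noncomputable def Sfin (X : Matrix (Fin m) (Fin n) ℝ) : Finset (Fin n) :=
  Finset.univ.filter (fun i => lam (SIM X) i = 1)

lemma sum_lam_eq_card : ∑ i, lam (SIM X) i = ((Sfin X).card : ℝ) := by
  have h : ∀ i : Fin n, lam (SIM X) i = if lam (SIM X) i = 1 then (1 : ℝ) else 0 := by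
    intro i
    rcases sim_lam_01 X i with h | h <;> simp [h]
  rw [Finset.sum_congr rfl fun i _ => h i, Finset.sum_boole]
  rfl

lemma sum_sqrt_lam_eq_card : ∑ i, Real.sqrt (lam (SIM X) i) = ((Sfin X).card : ℝ) := by
  have h : ∀ i : Fin n, Real.sqrt (lam (SIM X) i) = lam (SIM X) i := by
    intro i
    rcases sim_lam_01 X i with h | h <;> simp [h]
  rw [Finset.sum_congr rfl fun i _ => h i]
  exact sum_lam_eq_card X

lemma card_Sfin : (Sfin X).card = Module.finrank ℝ (rs X) := by
  apply card_eq_finrank X (evb (SIM X)) (Sfin X)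
  · intro i hi
    exact evb_mem_of_lam_one X (by simpa [Sfin] using hi)
  · intro i hi
    have h0 : lam (SIM X) i = 0 := by
      rcases sim_lam_01 X i with h | h
      · exact absurd (by simpa [Sfin] using h) hi
      · exact h
    exact evb_orth_of_lam_zero X h0

lemma rank_eq_finrank_rs : X.rank = Module.finrank ℝ (rs X) := by
  rw [← Matrix.rank_transpose X, Matrix.rank_eq_finrank_span_cols,
    ← LinearEquiv.finrank_map_eq (WithLp.linearEquiv 2 ℝ (Fin n → ℝ)).symm, Submodule.map_span,
    ← Set.range_comp]
  rfl

lemma nuclear_sim : nuclearNorm (SIM X) = (X.rank : ℝ) := by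
  rw [nuclearNorm_eq, sum_sqrt_lam_eq_card, card_Sfin, rank_eq_finrank_rs]

lemma trace_sim : (SIM X).trace = (X.rank : ℝ) := by
  have h1 : (SIM X).trace = ∑ i, ⇑(evb (SIM X) i) ⬝ᵥ (SIM X *ᵥ ⇑(evb (SIM X) i)) :=
    (sum_dot_eq_trace _ _).symm
  have h2 : ∀ i : Fin n, ⇑(evb (SIM X) i) ⬝ᵥ (SIM X *ᵥ ⇑(evb (SIM X) i)) = lam (SIM X) i := by
    intro i
    rw [sim_eigen_mulVec X i]
    simp [dotProduct_smul, smul_eq_mul, dot_self_evb (evb (SIM X)) i]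
  rw [h1, Finset.sum_congr rfl fun i _ => h2 i, sum_lam_eq_card, card_Sfin, rank_eq_finrank_rs]

end RankTrace

section Minimizer

variable (X : Matrix (Fin m) (Fin n) ℝ) (Z : Matrix (Fin n) (Fin n) ℝ)

lemma norm_sim_evb_le (i : Fin n) : ‖toE (SIM X *ᵥ ⇑(evb Z i))‖ ≤ 1 := by
  calc ‖toE (SIM X *ᵥ ⇑(evb Z i))‖ ≤ ‖toE ⇑(evb Z i)‖ := norm_sim_le X _
    _ = 1 := norm_evb_toE _ i

lemma term_le (i : Fin n) :
    ⟪toE (SIM X *ᵥ ⇑(evb Z i)), toE (Z *ᵥ ⇑(evb Z i))⟫ ≤ Real.sqrt (lam Z i) := by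
  calc ⟪toE (SIM X *ᵥ ⇑(evb Z i)), toE (Z *ᵥ ⇑(evb Z i))⟫
      ≤ ‖toE (SIM X *ᵥ ⇑(evb Z i))‖ * ‖toE (Z *ᵥ ⇑(evb Z i))‖ := real_inner_le_norm _ _
    _ ≤ 1 * Real.sqrt (lam Z i) :=
        mul_le_mul (norm_sim_evb_le X Z i) (le_of_eq (norm_Zv Z i)) (norm_nonneg _) zero_le_one
    _ = Real.sqrt (lam Z i) := one_mul _

lemma lower_bound (hZ : X = X * Z) : (X.rank : ℝ) ≤ nuclearNorm Z := by
  have hsum := sum_inner_eq_trace_sim X Z (sim_mul_Z X Z hZ) (evb Z)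
  rw [trace_sim] at hsum
  rw [nuclearNorm_eq, ← hsum]
  exact Finset.sum_le_sum fun i _ => term_le X Z i

lemma sim_norm_eq {x : EuclideanSpace ℝ (Fin n)} (h : ‖toE (SIM X *ᵥ ⇑x)‖ = ‖x‖) :
    toE (SIM X *ᵥ ⇑x) = x := by
  rw [sim_mulVec X ⇑x, coe_toE] at h ⊢
  set p : EuclideanSpace ℝ (Fin n) := ↑((rs X).orthogonalProjectionOnto x) with hp
  have hsub : x - p ∈ (rs X)ᗮ := Submodule.sub_starProjection_mem_orthogonal x
  have hinner : ⟪p, x - p⟫ = 0 :=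
    (Submodule.mem_orthogonal _ _).1 hsub p (Submodule.coe_mem _)
  have hexp := norm_add_sq_real p (x - p)
  have hx : p + (x - p) = x := by abel
  rw [hx, hinner] at hexp
  have hzero : ‖x - p‖ ^ 2 = 0 := by rw [h] at hexp; nlinarith
  have : x - p = 0 := by
    rw [pow_eq_zero_iff (by norm_num : 2 ≠ 0)] at hzero
    exact norm_eq_zero.mp hzero
  have := sub_eq_zero.mp this
  rw [this]

lemma unique (hZ : X = X * Z) (hnn : nuclearNorm Z = (X.rank : ℝ)) : Z = SIM X := by
  have hsum := sum_inner_eq_trace_sim X Z (sim_mul_Z X Z hZ) (evb Z)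
  rw [trace_sim] at hsum
  have hsum2 : ∑ i, ⟪toE (SIM X *ᵥ ⇑(evb Z i)), toE (Z *ᵥ ⇑(evb Z i))⟫
      = ∑ i, Real.sqrt (lam Z i) := by
    rw [hsum, ← hnn, nuclearNorm_eq]
  have heq := (Finset.sum_eq_sum_iff_of_le fun i _ => term_le X Z i).mp hsum2
  have key : ∀ i : Fin n,
      (lam Z i = 1 ∧ Z *ᵥ ⇑(evb Z i) = ⇑(evb Z i) ∧ evb Z i ∈ rs X)
      ∨ (lam Z i = 0 ∧ Z *ᵥ ⇑(evb Z i) = 0) := by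
    intro i
    rcases eq_or_ne (lam Z i) 0 with h0 | h0
    · right
      refine ⟨h0, ?_⟩
      have hn := norm_Zv Z i
      rw [h0, Real.sqrt_zero] at hn
      have h2 : toE (Z *ᵥ ⇑(evb Z i)) = 0 := norm_eq_zero.mp hn
      exact congrArg WithLp.ofLp h2
    · left
      have hpos : 0 < lam Z i := lt_of_le_of_ne (lam_nonneg Z i) (Ne.symm h0)
      have hspos : 0 < Real.sqrt (lam Z i) := Real.sqrt_pos.mpr hpos
      have hEi := heq i (Finset.mem_univ i)
      have hge : 1 ≤ ‖toE (SIM X *ᵥ ⇑(evb Z i))‖ := by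
        by_contra hlt
        push_neg at hlt
        have hcs := real_inner_le_norm (toE (SIM X *ᵥ ⇑(evb Z i))) (toE (Z *ᵥ ⇑(evb Z i)))
        rw [hEi, norm_Zv] at hcs
        nlinarith
      have hn1 : ‖toE (SIM X *ᵥ ⇑(evb Z i))‖ = 1 :=
        le_antisymm (norm_sim_evb_le X Z i) hge
      have hfix : toE (SIM X *ᵥ ⇑(evb Z i)) = evb Z i := by
        apply sim_norm_eq X
        rw [hn1]
        exact ((evb Z).orthonormal.1 i).symm
      have hmem : evb Z i ∈ rs X := by rw [← hfix]; exact sim_mem X _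
      have hCS : ⟪toE (SIM X *ᵥ ⇑(evb Z i)), toE (Z *ᵥ ⇑(evb Z i))⟫
          = ‖toE (SIM X *ᵥ ⇑(evb Z i))‖ * ‖toE (Z *ᵥ ⇑(evb Z i))‖ := by
        rw [hEi, hn1, norm_Zv, one_mul]
      have hsmul := inner_eq_norm_mul_iff_real.mp hCS
      rw [norm_Zv, hn1, hfix, one_smul] at hsmul
      -- hsmul : √λ • evb Z i = toE (Z *ᵥ ⇑(evb Z i))
      have hzx : Z *ᵥ ⇑(evb Z i) = Real.sqrt (lam Z i) • ⇑(evb Z i) := by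
        have h5 : toE (Z *ᵥ ⇑(evb Z i)) = toE (Real.sqrt (lam Z i) • ⇑(evb Z i)) := by
          rw [← hsmul]; rfl
        exact congrArg WithLp.ofLp h5
      have hZt : Zᵀ *ᵥ ⇑(evb Z i) = ⇑(evb Z i) := fixed_on_rs X Z hZ hmem
      have hd1 : ⇑(evb Z i) ⬝ᵥ (Z *ᵥ ⇑(evb Z i)) = 1 := by
        rw [Matrix.dotProduct_mulVec, ← Matrix.mulVec_transpose, hZt, dot_self_evb]
      have hd2 : ⇑(evb Z i) ⬝ᵥ (Z *ᵥ ⇑(evb Z i)) = Real.sqrt (lam Z i) := by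
        rw [hzx]
        simp [dotProduct_smul, smul_eq_mul, dot_self_evb (evb Z) i]
      have hs1 : Real.sqrt (lam Z i) = 1 := by rw [← hd2, hd1]
      have hl1 : lam Z i = 1 := by
        have hm := Real.mul_self_sqrt hpos.le
        rw [hs1, one_mul] at hm
        exact hm.symm
      refine ⟨hl1, ?_, hmem⟩
      rw [hzx, hs1, one_smul]
  classical
  set T : Finset (Fin n) := Finset.univ.filter (fun i => lam Z i = 1) with hT
  have hmemT : ∀ i ∈ T, evb Z i ∈ rs X := by
    intro i hi
    rcases key i with ⟨_, _, hm⟩ | ⟨h0, _⟩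
    · exact hm
    · exfalso
      have : lam Z i = 1 := by simpa [hT] using hi
      rw [h0] at this
      exact zero_ne_one this
  have hcardT : T.card = Module.finrank ℝ (rs X) := by
    have hs : ∑ i, Real.sqrt (lam Z i) = (T.card : ℝ) := by
      have h : ∀ i : Fin n, Real.sqrt (lam Z i) = if lam Z i = 1 then (1 : ℝ) else 0 := by
        intro i
        rcases key i with ⟨h1, _, _⟩ | ⟨h0, _⟩
        · simp [h1]
        · simp [h0]
      rw [Finset.sum_congr rfl fun i _ => h i, Finset.sum_boole]
    have hc : (T.card : ℝ) = (Module.finrank ℝ (rs X) : ℝ) := by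
      rw [← hs, ← nuclearNorm_eq, hnn, rank_eq_finrank_rs]
    exact_mod_cast hc
  have horthT := orth_of_card X (evb Z) T hmemT hcardT
  apply ext_mulVec_basis (evb Z)
  intro i
  by_cases hi : i ∈ T
  · rcases key i with ⟨_, hzx, hm⟩ | ⟨h0, _⟩
    · rw [hzx]
      exact congrArg WithLp.ofLp (sim_fix X hm).symm
    · exfalso
      have : lam Z i = 1 := by simpa [hT] using hi
      rw [h0] at this
      exact zero_ne_one this
  · rcases key i with ⟨h1, _, _⟩ | ⟨_, hz0⟩
    · exact absurd (by simp [hT, h1] : i ∈ T) hi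
    · rw [hz0]
      exact congrArg WithLp.ofLp (sim_ann X (horthT i hi)).symm

end Minimizer
end SIMProof

/-- For a nonzero real `m × n` matrix `X`, the shape interaction matrix `SIM X` is the
unique solution of: minimize `‖Z‖₊` subject to `X = X * Z`, and the minimum value is
`rank X`. Namely: (i) `X * SIM X = X`; (ii) `‖SIM X‖₊ = rank X`; (iii) every feasible
`Z` has nuclear norm at least `rank X`; (iv) any feasible `Z` with nuclear norm equal
to `rank X` is `SIM X`. -/
theorem sim_unique_minimizer {m n : ℕ} (X : Matrix (Fin m) (Fin n) ℝ) (hX : X ≠ 0) :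
    X * SIM X = X ∧
    nuclearNorm (SIM X) = (X.rank : ℝ) ∧
    (∀ Z : Matrix (Fin n) (Fin n) ℝ, X = X * Z → (X.rank : ℝ) ≤ nuclearNorm Z) ∧
    (∀ Z : Matrix (Fin n) (Fin n) ℝ, X = X * Z → nuclearNorm Z = (X.rank : ℝ) →
      Z = SIM X) := by
  exact ⟨SIMProof.X_mul_sim X, SIMProof.nuclear_sim X,
    fun Z hZ => SIMProof.lower_bound X Z hZ,
    fun Z hZ hnn => SIMProof.unique X Z hZ hnn⟩
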